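/- There exists ε > 0 and a function F : ℂ → ℂ that is analytic on the open horizontal strip {ζ ∈ ℂ : |Im ζ| < ε} and satisfies F(ξ) = L̂_k(ξ) for every real ξ; that is, the Fourier transform of the fundamental function of k-hyperbolic cardinal spline interpolation extends analytically to a strip around the real axis. -/

import Mathlib

open MeasureTheory Filter
open scoped ENNReal

noncomputable def S (α : ℝ) (k : ℕ) (ξ : ℝ) : ℝ :=
  ∑' j : ℤ, (((ξ - 2 * Real.pi * j) ^ 2 + α ^ 2) ^ k)⁻¹

noncomputable def Lhat (α : ℝ) (k : ℕ) (ξ : ℝ) : ℝ :=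
  (Real.sqrt (2 * Real.pi))⁻¹ * ((ξ ^ 2 + α ^ 2) ^ k)⁻¹ / S α k ξ

noncomputable def Lk (α : ℝ) (k : ℕ) (x : ℝ) : ℝ :=
  (((Real.sqrt (2 * Real.pi) : ℂ))⁻¹ *
    ∫ ξ : ℝ, (Lhat α k ξ : ℂ) * Complex.exp (Complex.I * x * ξ)).re

section helpers
open Complex Set

noncomputable def term (α : ℝ) (k : ℕ) (j : ℤ) (ζ : ℂ) : ℂ :=
  (((ζ - 2 * (Real.pi : ℂ) * (j : ℂ)) ^ 2 + (α : ℂ) ^ 2) ^ k)⁻¹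

noncomputable def Sc (α : ℝ) (k : ℕ) (ζ : ℂ) : ℂ := ∑' j : ℤ, term α k j ζ

-- basic nonvanishing
lemma sq_add_ne {α : ℝ} (hα : 0 < α) {w : ℂ} (h : |w.im| < α) :
    w ^ 2 + (α : ℂ) ^ 2 ≠ 0 := by
  intro heq
  have h2 : (w - α * Complex.I) * (w + α * Complex.I) = 0 := by
    have := Complex.I_sq
    linear_combination heq - (α:ℂ)^2 * this
  rw [abs_lt] at h
  rcases mul_eq_zero.mp h2 with h3 | h3
  · have h4 := congrArg Complex.im h3
    simp only [Complex.sub_im, Complex.mul_im, Complex.I_im, Complex.ofReal_re,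
      Complex.I_re, Complex.ofReal_im, Complex.zero_im] at h4
    linarith
  · have h4 := congrArg Complex.im h3
    simp only [Complex.add_im, Complex.mul_im, Complex.I_im, Complex.ofReal_re,
      Complex.I_re, Complex.ofReal_im, Complex.zero_im] at h4
    linarith

lemma term_ofReal (α : ℝ) (k : ℕ) (j : ℤ) (ξ : ℝ) :
    term α k j (ξ : ℂ) = ((((ξ - 2 * Real.pi * j) ^ 2 + α ^ 2) ^ k)⁻¹ : ℝ) := by
  unfold term
  push_cast
  ring

-- lower bound for the denominator base
lemma base_lb {α : ℝ} (hα : 0 < α) {ζ : ℂ} (h : |ζ.im| ≤ α / 2) (c : ℝ) :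
    (ζ.re - c) ^ 2 + 3 * α ^ 2 / 4 ≤ ‖(ζ - c) ^ 2 + (α : ℂ) ^ 2‖ := by
  have hre : ((ζ - c) ^ 2 + (α : ℂ) ^ 2).re = (ζ.re - c) ^ 2 - ζ.im ^ 2 + α ^ 2 := by
    simp [pow_two, Complex.mul_re, Complex.sub_re, Complex.sub_im, Complex.add_re]
    try ring
  have him : ζ.im ^ 2 ≤ α ^ 2 / 4 := by
    rw [abs_le] at h
    nlinarith
  calc (ζ.re - c) ^ 2 + 3 * α ^ 2 / 4 ≤ ((ζ - c) ^ 2 + (α : ℂ) ^ 2).re := by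
        rw [hre]; nlinarith
    _ ≤ |((ζ - c) ^ 2 + (α : ℂ) ^ 2).re| := le_abs_self _
    _ ≤ ‖(ζ - c) ^ 2 + (α : ℂ) ^ 2‖ := Complex.abs_re_le_norm _

-- bound for a single term
lemma term_bound {α : ℝ} (hα : 0 < α) {k : ℕ} (hk : 1 ≤ k) {ζ : ℂ} (h : |ζ.im| ≤ α / 2)
    (j : ℤ) :
    ‖term α k j ζ‖ ≤ ((3 * α ^ 2 / 4) ^ (k - 1))⁻¹ *
      ((ζ.re - 2 * Real.pi * j) ^ 2 + 3 * α ^ 2 / 4)⁻¹ := by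
  set m : ℝ := 3 * α ^ 2 / 4 with hm
  have hm0 : 0 < m := by positivity
  set A : ℝ := (ζ.re - 2 * Real.pi * j) ^ 2 with hA
  have hA0 : 0 ≤ A := sq_nonneg _
  have hlb : A + m ≤ ‖(ζ - (2 * Real.pi * j : ℝ)) ^ 2 + (α : ℂ) ^ 2‖ := by
    simpa using base_lb hα h (2 * Real.pi * j)
  have hb : ‖term α k j ζ‖ = (‖(ζ - (2 * Real.pi * j : ℝ)) ^ 2 + (α : ℂ) ^ 2‖ ^ k)⁻¹ := by
    rw [term]
    push_cast
    rw [norm_inv, norm_pow]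
  rw [hb]
  have hpow : (A + m) * m ^ (k - 1) ≤ ‖(ζ - (2 * Real.pi * j : ℝ)) ^ 2 + (α : ℂ) ^ 2‖ ^ k := by
    calc (A + m) * m ^ (k - 1) ≤ (A + m) * (A + m) ^ (k - 1) := by
          apply mul_le_mul_of_nonneg_left _ (by linarith)
          exact pow_le_pow_left₀ hm0.le (by linarith) _
      _ = (A + m) ^ k := by
          rw [← pow_succ']
          congr 1
          omega
      _ ≤ ‖(ζ - (2 * Real.pi * j : ℝ)) ^ 2 + (α : ℂ) ^ 2‖ ^ k :=
          pow_le_pow_left₀ (by positivity) hlb _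
  calc (‖(ζ - (2 * Real.pi * j : ℝ)) ^ 2 + (α : ℂ) ^ 2‖ ^ k)⁻¹
      ≤ ((A + m) * m ^ (k - 1))⁻¹ := by
        apply inv_anti₀ (by positivity) hpow
    _ = (m ^ (k - 1))⁻¹ * (A + m)⁻¹ := by
        rw [mul_inv]; ring

-- summability of 1/(j^2+1) over ℤ
lemma summable_inv_sq_add_one : Summable (fun j : ℤ => (((j : ℝ) ^ 2 + 1))⁻¹) := by
  have h1 : Summable (fun j : ℤ => 1 / (j : ℝ) ^ 2 + if j = 0 then (1 : ℝ) else 0) := by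
    apply Summable.add
    · exact Real.summable_one_div_int_pow.mpr one_lt_two
    · apply summable_of_ne_finset_zero (s := {(0 : ℤ)})
      intro j hj
      simp only [Finset.mem_singleton] at hj
      simp [hj]
  apply Summable.of_nonneg_of_le (fun j => by positivity) _ h1
  intro j
  rcases eq_or_ne j 0 with rfl | hj
  · simp
  · have hj2 : (1 : ℝ) ≤ (j : ℝ) ^ 2 := by
      have : (1 : ℝ) ≤ |(j : ℝ)| := by
        rw [← Int.cast_abs]
        exact_mod_cast Int.one_le_abs hj
      nlinarith [_root_.sq_abs ((j : ℝ)), abs_nonneg ((j : ℝ))]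
    simp only [hj, if_false, add_zero, one_div]
    apply inv_anti₀ (by positivity) (by linarith)

-- key comparison inequality
lemma key_ineq {R m : ℝ} (hR : 0 ≤ R) (hm : 0 < m) {x : ℝ} (hx : |x| ≤ R) (j : ℤ) :
    min (m / (R ^ 2 + 1)) (min 1 m) * ((j : ℝ) ^ 2 + 1) ≤ (x - 2 * Real.pi * j) ^ 2 + m := by
  set c0 : ℝ := min (m / (R ^ 2 + 1)) (min 1 m) with hc0
  have hc0pos : 0 < c0 := by
    apply lt_min (by positivity) (lt_min one_pos hm)
  have hc1 : c0 ≤ 1 := le_trans (min_le_right _ _) (min_le_left _ _)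
  have hcm : c0 ≤ m := le_trans (min_le_right _ _) (min_le_right _ _)
  have hxR := abs_le.mp hx
  rcases le_or_gt |(j : ℝ)| R with hj | hj
  · have hjsq : (j : ℝ) ^ 2 ≤ R ^ 2 := by
      nlinarith [_root_.sq_abs ((j : ℝ)), abs_nonneg ((j : ℝ))]
    have : c0 * ((j : ℝ) ^ 2 + 1) ≤ (m / (R ^ 2 + 1)) * (R ^ 2 + 1) := by
      apply mul_le_mul (min_le_left _ _) (by linarith) (by positivity) (by positivity)
    rw [div_mul_cancel₀] at this
    · nlinarith [sq_nonneg (x - 2 * Real.pi * j)]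
    · positivity
  · -- |j| > R, so (x - 2πj)^2 ≥ j^2
    have hπ : (3 : ℝ) < Real.pi := Real.pi_gt_three
    have hjsq : (j : ℝ) ^ 2 ≤ (x - 2 * Real.pi * j) ^ 2 := by
      rcases abs_cases ((j : ℝ)) with ⟨hje, hjn⟩ | ⟨hje, hjn⟩
      · have f1 : 0 ≤ 2 * Real.pi * j - j - x := by nlinarith
        have f2 : 0 ≤ 2 * Real.pi * j + j - x := by nlinarith
        nlinarith [mul_nonneg f1 f2]
      · have f1 : 0 ≤ x - 2 * Real.pi * j + j := by nlinarith
        have f2 : 0 ≤ x - 2 * Real.pi * j - j := by nlinarith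
        nlinarith [mul_nonneg f1 f2]
    nlinarith

-- summability of the complex terms
lemma sc_summable {α : ℝ} (hα : 0 < α) {k : ℕ} (hk : 1 ≤ k) {ζ : ℂ} (h : |ζ.im| ≤ α / 2) :
    Summable (fun j : ℤ => term α k j ζ) := by
  set m : ℝ := 3 * α ^ 2 / 4 with hm
  have hm0 : 0 < m := by positivity
  set R : ℝ := |ζ.re| with hR
  set c0 : ℝ := min (m / (R ^ 2 + 1)) (min 1 m) with hc0
  have hc0pos : 0 < c0 := lt_min (by positivity) (lt_min one_pos hm0)
  apply Summable.of_norm_bounded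
    (g := fun j : ℤ => (m ^ (k - 1))⁻¹ * (c0 * ((j : ℝ) ^ 2 + 1))⁻¹)
  · apply Summable.mul_left
    simp_rw [mul_inv]
    exact (summable_inv_sq_add_one.mul_left _)
  · intro j
    refine (term_bound hα hk h j).trans ?_
    apply mul_le_mul_of_nonneg_left _ (by positivity)
    apply inv_anti₀ (by positivity)
    exact key_ineq (abs_nonneg _) hm0 le_rfl j

lemma term_differentiableAt {α : ℝ} (hα : 0 < α) {k : ℕ} (j : ℤ) {ζ : ℂ}
    (h : |ζ.im| < α) : DifferentiableAt ℂ (term α k j) ζ := by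
  have him : |(ζ - 2 * (Real.pi : ℂ) * (j : ℂ)).im| < α := by
    have : (ζ - 2 * (Real.pi : ℂ) * (j : ℂ)).im = ζ.im := by
      simp
    rwa [this]
  have hne : ((ζ - 2 * (Real.pi : ℂ) * (j : ℂ)) ^ 2 + (α : ℂ) ^ 2) ≠ 0 :=
    sq_add_ne hα him
  unfold term
  apply DifferentiableAt.inv
  · fun_prop
  · exact pow_ne_zero _ hne

lemma sc_differentiableAt {α : ℝ} (hα : 0 < α) {k : ℕ} (hk : 1 ≤ k) {ζ₀ : ℂ}
    (h : |ζ₀.im| < α / 2) : DifferentiableAt ℂ (Sc α k) ζ₀ := by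
  set r : ℝ := (α / 2 - |ζ₀.im|) / 2 with hr
  have hr0 : 0 < r := by
    rw [hr]; linarith
  set m : ℝ := 3 * α ^ 2 / 4 with hm
  have hm0 : 0 < m := by positivity
  set R : ℝ := |ζ₀.re| + r with hRdef
  have hR0 : 0 ≤ R := by positivity
  set c0 : ℝ := min (m / (R ^ 2 + 1)) (min 1 m) with hc0
  have hc0pos : 0 < c0 := lt_min (by positivity) (lt_min one_pos hm0)
  have hball : ∀ ζ ∈ Metric.ball ζ₀ r, |ζ.im| ≤ α / 2 ∧ |ζ.re| ≤ R := by
    intro ζ hζ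
    rw [Metric.mem_ball, Complex.dist_eq] at hζ
    have h1 : |ζ.im - ζ₀.im| ≤ ‖ζ - ζ₀‖ := by
      simpa using Complex.abs_im_le_norm (ζ - ζ₀)
    have h2 : |ζ.re - ζ₀.re| ≤ ‖ζ - ζ₀‖ := by
      simpa using Complex.abs_re_le_norm (ζ - ζ₀)
    constructor
    · have := abs_sub_abs_le_abs_sub ζ.im ζ₀.im
      rw [hr] at *
      have : |ζ.im| ≤ |ζ₀.im| + |ζ.im - ζ₀.im| := by
        have := abs_sub_abs_le_abs_sub ζ.im ζ₀.im
        linarith [abs_sub_abs_le_abs_sub ζ.im ζ₀.im]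
      linarith
    · have : |ζ.re| ≤ |ζ₀.re| + |ζ.re - ζ₀.re| := by
        linarith [abs_sub_abs_le_abs_sub ζ.re ζ₀.re]
      linarith
  have hdiff : DifferentiableOn ℂ (fun ζ => ∑' j : ℤ, term α k j ζ) (Metric.ball ζ₀ r) := by
    apply differentiableOn_tsum_of_summable_norm
      (u := fun j : ℤ => (m ^ (k - 1))⁻¹ * (c0 * ((j : ℝ) ^ 2 + 1))⁻¹)
    · apply Summable.mul_left
      simp_rw [mul_inv]
      exact (summable_inv_sq_add_one.mul_left _)
    · intro j
      intro ζ hζ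
      exact (term_differentiableAt hα j (lt_of_le_of_lt (hball ζ hζ).1 (by linarith))).differentiableWithinAt
    · exact Metric.isOpen_ball
    · intro j ζ hζ
      refine (term_bound hα hk (hball ζ hζ).1 j).trans ?_
      apply mul_le_mul_of_nonneg_left _ (by positivity)
      apply inv_anti₀ (by positivity)
      exact key_ineq hR0 hm0 (hball ζ hζ).2 j
  have : DifferentiableOn ℂ (Sc α k) (Metric.ball ζ₀ r) := by
    apply hdiff.congr
    intro ζ hζ
    rfl
  exact this.differentiableAt (Metric.isOpen_ball.mem_nhds (Metric.mem_ball_self hr0))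

lemma sc_periodic {α : ℝ} {k : ℕ} (ζ : ℂ) (n : ℤ) :
    Sc α k (ζ - 2 * (Real.pi : ℂ) * (n : ℂ)) = Sc α k ζ := by
  unfold Sc
  rw [← (Equiv.addRight n).tsum_eq (fun j => term α k j ζ)]
  apply tsum_congr
  intro j
  unfold term
  simp only [Equiv.coe_addRight]
  push_cast
  ring_nf

lemma sc_ofReal {α : ℝ} (ξ : ℝ) {k : ℕ} : Sc α k (ξ : ℂ) = ((S α k ξ : ℝ) : ℂ) := by
  rw [Sc, S, Complex.ofReal_tsum]
  exact tsum_congr fun j => term_ofReal α k j ξ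

lemma s_summable {α : ℝ} (hα : 0 < α) {k : ℕ} (hk : 1 ≤ k) (ξ : ℝ) :
    Summable (fun j : ℤ => (((ξ - 2 * Real.pi * j) ^ 2 + α ^ 2) ^ k)⁻¹) := by
  rw [← Complex.summable_ofReal]
  have : |((ξ : ℂ)).im| ≤ α / 2 := by simp; positivity
  exact ((sc_summable hα hk this).congr fun j => (term_ofReal α k j ξ))

lemma s_pos {α : ℝ} (hα : 0 < α) {k : ℕ} (hk : 1 ≤ k) (ξ : ℝ) : 0 < S α k ξ := by
  apply Summable.tsum_pos (s_summable hα hk ξ) (fun j => by positivity) 0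
  positivity

lemma sc_reduce {α : ℝ} {k : ℕ} (ζ : ℂ) :
    ∃ ζ' : ℂ, ζ'.re ∈ Set.Icc 0 (2 * Real.pi) ∧ ζ'.im = ζ.im ∧
      Sc α k ζ' = Sc α k ζ := by
  have hπ : (0 : ℝ) < 2 * Real.pi := by positivity
  set n : ℤ := ⌊ζ.re / (2 * Real.pi)⌋ with hn
  refine ⟨ζ - 2 * (Real.pi : ℂ) * (n : ℂ), ?_, ?_, sc_periodic ζ n⟩
  · have h1 : (n : ℝ) ≤ ζ.re / (2 * Real.pi) := Int.floor_le _
    have h2 : ζ.re / (2 * Real.pi) < n + 1 := Int.lt_floor_add_one _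
    have hre : (ζ - 2 * (Real.pi : ℂ) * (n : ℂ)).re = ζ.re - 2 * Real.pi * n := by
      simp
    rw [hre]
    constructor
    · have := mul_le_mul_of_nonneg_left h1 hπ.le
      rw [mul_div_cancel₀ _ hπ.ne'] at this
      linarith
    · have := mul_lt_mul_of_pos_left h2 hπ
      rw [mul_div_cancel₀ _ hπ.ne'] at this
      nlinarith [Real.pi_pos]
  · simp

lemma exists_eps {α : ℝ} (hα : 0 < α) {k : ℕ} (hk : 1 ≤ k) :
    ∃ ε : ℝ, 0 < ε ∧ ε ≤ α / 4 ∧ ∀ ζ : ℂ, |ζ.im| < ε → Sc α k ζ ≠ 0 := by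
  set K : Set ℂ := Set.Icc 0 (2 * Real.pi) ×ℂ Set.Icc (-(α / 4)) (α / 4) with hK
  have hKsub : ∀ ζ ∈ K, |ζ.im| ≤ α / 4 := by
    intro ζ hζ
    rw [hK, Complex.mem_reProdIm] at hζ
    rw [abs_le]
    exact ⟨hζ.2.1, hζ.2.2⟩
  have hKc : IsCompact K := by
    apply Metric.isCompact_of_isClosed_isBounded
    · exact IsClosed.reProdIm isClosed_Icc isClosed_Icc
    · exact Bornology.IsBounded.reProdIm (Metric.isBounded_Icc _ _) (Metric.isBounded_Icc _ _)
  have hcont : ContinuousOn (Sc α k) K := by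
    intro ζ hζ
    have : |ζ.im| < α / 2 := lt_of_le_of_lt (hKsub ζ hζ) (by linarith)
    exact (sc_differentiableAt hα hk this).continuousAt.continuousWithinAt
  set Z : Set ℂ := K ∩ (Sc α k) ⁻¹' {0} with hZ
  have hZc : IsCompact Z :=
    hKc.of_isClosed_subset
      (hcont.preimage_isClosed_of_isClosed hKc.isClosed isClosed_singleton)
      Set.inter_subset_left
  have hZreal : ∀ ζ ∈ Z, ζ.im ≠ 0 := by
    intro ζ hζ h0
    have hζK : Sc α k ζ = 0 := hζ.2
    have : ζ = ((ζ.re : ℝ) : ℂ) := by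
      apply Complex.ext <;> simp [h0]
    rw [this, sc_ofReal] at hζK
    have := s_pos hα hk ζ.re
    rw [Complex.ofReal_eq_zero] at hζK
    linarith
  rcases Set.eq_empty_or_nonempty Z with hZe | hZne
  · refine ⟨α / 4, by positivity, le_rfl, ?_⟩
    intro ζ hζim h0
    obtain ⟨ζ', hre, him, heq⟩ := sc_reduce (α := α) (k := k) ζ
    have hζ'K : ζ' ∈ Z := by
      constructor
      · rw [hK, Complex.mem_reProdIm]
        refine ⟨hre, ?_⟩
        rw [him]
        rw [abs_lt] at hζim
        exact ⟨by linarith [hζim.1], by linarith [hζim.2]⟩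
      · simp [heq, h0]
    rw [hZe] at hζ'K
    exact hζ'K
  · obtain ⟨ζ₀, hζ₀Z, hmin⟩ := hZc.exists_isMinOn hZne
      ((continuous_abs.comp Complex.continuous_im).continuousOn)
    set δ : ℝ := |ζ₀.im| with hδ
    have hδ0 : 0 < δ := abs_pos.mpr (hZreal ζ₀ hζ₀Z)
    refine ⟨min δ (α / 4), lt_min hδ0 (by positivity), min_le_right _ _, ?_⟩
    intro ζ hζim h0
    obtain ⟨ζ', hre, him, heq⟩ := sc_reduce (α := α) (k := k) ζ
    have hζ'Z : ζ' ∈ Z := by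
      constructor
      · rw [hK, Complex.mem_reProdIm]
        refine ⟨hre, ?_⟩
        rw [him]
        have : |ζ.im| < α / 4 := lt_of_lt_of_le hζim (min_le_right _ _)
        rw [abs_lt] at this
        exact ⟨by linarith [this.1], by linarith [this.2]⟩
      · simp [heq, h0]
    have h2' : |ζ₀.im| ≤ |ζ'.im| := hmin hζ'Z
    rw [him] at h2'
    have h2 : δ ≤ |ζ.im| := h2'
    have h3 : |ζ.im| < δ := lt_of_lt_of_le hζim (min_le_left _ _)
    linarith

end helpers

open Complex Set in
/-- The Fourier transform of the fundamental function of k-hyperbolic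
cardinal spline interpolation extends analytically to a strip around the real axis. -/
theorem stmt_0 (α : ℝ) (hα : 0 < α) (k : ℕ) (hk : 1 ≤ k) :
    ∃ ε > (0 : ℝ), ∃ F : ℂ → ℂ,
      AnalyticOnNhd ℂ F {ζ : ℂ | |ζ.im| < ε} ∧
      ∀ ξ : ℝ, F ξ = (Lhat α k ξ : ℂ) := by
  obtain ⟨ε, hε0, hεα, hne⟩ := exists_eps hα hk
  refine ⟨ε, hε0,
    fun ζ => ((Real.sqrt (2 * Real.pi) : ℂ))⁻¹ * ((ζ ^ 2 + (α : ℂ) ^ 2) ^ k)⁻¹ / Sc α k ζ,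
    ?_, ?_⟩
  · apply DifferentiableOn.analyticOnNhd _
      (isOpen_lt (Complex.continuous_im.abs) continuous_const)
    intro ζ hζ
    have him : |ζ.im| < ε := hζ
    have h1 : DifferentiableAt ℂ (fun ζ : ℂ => ((ζ ^ 2 + (α : ℂ) ^ 2) ^ k)⁻¹) ζ := by
      apply DifferentiableAt.inv (by fun_prop)
      have : |ζ.im| < α := lt_of_lt_of_le him (by linarith)
      exact pow_ne_zero _ (sq_add_ne hα this)
    have h2 : DifferentiableAt ℂ (Sc α k) ζ :=
      sc_differentiableAt hα hk (show |ζ.im| < α / 2 by linarith [lt_of_lt_of_le him hεα])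
    exact (((differentiableAt_const _).mul h1).div h2 (hne ζ him)).differentiableWithinAt
  · intro ξ
    have hreal : Sc α k (ξ : ℂ) = ((S α k ξ : ℝ) : ℂ) := sc_ofReal ξ
    show _ / Sc α k (ξ : ℂ) = _
    rw [hreal, Lhat]
    push_cast
    ring
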